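/- Let α > 0, β ∈ (0,1] and γ > 0. There exists C > 0 such that for every y ∈ F_{β,γ}(𝔇_α) and every K ≥ 2/α: ‖ ψ^K_{β,γ}(y) − ψ_{β,γ}(y) ‖₂ ≤ C (1 + ‖y‖₂)/K, where ψ^K_{β,γ}(y) = h^K_{β,γ}(F_{β,γ}^{−1}(y)) with F_{β,γ}^{−1}(y) = (y₁^{1/β}, (y₂/γ)^{1/β}). -/

import Mathlib

open Real Set

/-- The jump compensator `h^K_{β,γ}` of the transformed scaled birth–death
process. -/
noncomputable def hKbd (lam₁ lam₂ mu₁ mu₂ a b c d β γ K : ℝ) (x : ℝ × ℝ) : ℝ × ℝ :=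
  (lam₁ * K * x.1 * ((x.1 + 1 / K) ^ β - x.1 ^ β)
      + K * x.1 * (mu₁ + a * x.1 + c * x.2) * ((x.1 - 1 / K) ^ β - x.1 ^ β),
   γ * lam₂ * K * x.2 * ((x.2 + 1 / K) ^ β - x.2 ^ β)
      + γ * K * x.2 * (mu₂ + b * x.2 + d * x.1) * ((x.2 - 1 / K) ^ β - x.2 ^ β))

/-- The push-forward field `ψ^K_{β,γ} = h^K_{β,γ} ∘ F_{β,γ}⁻¹`,
with `F_{β,γ}⁻¹(y) = (y₁^{1/β}, (y₂/γ)^{1/β})`. -/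
noncomputable def psiKbd (lam₁ lam₂ mu₁ mu₂ a b c d β γ K : ℝ) (y : ℝ × ℝ) : ℝ × ℝ :=
  hKbd lam₁ lam₂ mu₁ mu₂ a b c d β γ K (y.1 ^ (1 / β), (y.2 / γ) ^ (1 / β))

/-- The limiting push-forward vector field `ψ_{β,γ}` (with `τᵢ = λᵢ − μᵢ`). -/
noncomputable def psiLVbd (lam₁ lam₂ mu₁ mu₂ a b c d β γ : ℝ) (y : ℝ × ℝ) : ℝ × ℝ :=
  (β * y.1 * ((lam₁ - mu₁) - a * y.1 ^ (1 / β) - c * γ ^ (-(1 / β)) * y.2 ^ (1 / β)),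
   β * y.2 * ((lam₂ - mu₂) - b * γ ^ (-(1 / β)) * y.2 ^ (1 / β) - d * y.1 ^ (1 / β)))

/-- The transformation `F_{β,γ}(x₁,x₂) = (x₁^β, γ x₂^β)`. -/
noncomputable def FLV (β γ : ℝ) (x : ℝ × ℝ) : ℝ × ℝ := (x.1 ^ β, γ * x.2 ^ β)

/-- The cone-like domain `𝔇_α = { x ∈ (α,∞)² : x₁ ≥ α x₂, x₂ ≥ α x₁ }`. -/
def Dfrak (α : ℝ) : Set (ℝ × ℝ) :=
  {x | α < x.1 ∧ α < x.2 ∧ α * x.2 ≤ x.1 ∧ α * x.1 ≤ x.2}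

/-- Euclidean norm on `ℝ²`. -/
noncomputable def nrm2 (u : ℝ × ℝ) : ℝ := Real.sqrt (u.1 ^ 2 + u.2 ^ 2)

lemma rpow_lip {p m s t : ℝ} (hp : p ≤ 0) (hm : 0 < m) (hs : m ≤ s) (ht : m ≤ t) :
    |s ^ p - t ^ p| ≤ |p| * m ^ (p - 1) * |s - t| := by
  have key := (convex_Ici m).norm_image_sub_le_of_norm_hasDerivWithin_le
    (f := fun u => u ^ p) (f' := fun u => p * u ^ (p - 1)) (s := Ici m)
    (C := |p| * m ^ (p - 1))
    (fun u hu => (Real.hasDerivAt_rpow_const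
      (Or.inl (ne_of_gt (lt_of_lt_of_le hm hu)))).hasDerivWithinAt)
    (fun u hu => by
      have hu0 : 0 < u := lt_of_lt_of_le hm hu
      rw [Real.norm_eq_abs, abs_mul, abs_of_nonneg (Real.rpow_nonneg hu0.le _)]
      exact mul_le_mul_of_nonneg_left
        (Real.rpow_le_rpow_of_nonpos hm hu (by linarith)) (abs_nonneg p))
    ht hs
  simpa [Real.norm_eq_abs] using key

lemma taylor_rpow {β x h : ℝ} (hβ0 : 0 < β) (hβ1 : β ≤ 1) (hx : 0 < x)
    (hh : |h| ≤ x / 2) :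
    |(x + h) ^ β - x ^ β - β * x ^ (β - 1) * h| ≤ x ^ (β - 2) * h ^ 2 := by
  set g : ℝ → ℝ := fun t => (x + t) ^ β - β * x ^ (β - 1) * t with hg
  have habs : ∀ t ∈ uIcc (0:ℝ) h, |t| ≤ |h| := by
    intro t htt
    rw [Set.uIcc_eq_union] at htt
    rcases htt with h1 | h1 <;> rcases h1 with ⟨l, r⟩ <;>
      [ (rw [abs_of_nonneg l]; exact r.trans (le_abs_self h)) ;
        (rw [abs_of_nonpos r]; exact (neg_le_neg l).trans (neg_le_abs h)) ]
  have key := (convex_uIcc (0:ℝ) h).norm_image_sub_le_of_norm_hasDerivWithin_le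
    (f := g) (f' := fun t => β * (x + t) ^ (β - 1) - β * x ^ (β - 1))
    (s := uIcc (0:ℝ) h)
    (C := β * ((1 - β) * (x / 2) ^ (β - 2) * |h|))
    (fun t htt => by
      have hxt : x / 2 ≤ x + t := by
        have := (abs_le.mp ((habs t htt).trans hh)).1; linarith
      have hd1 : HasDerivAt (fun t : ℝ => (x + t) ^ β) (1 * β * (x + t) ^ (β - 1)) t :=
        (HasDerivAt.const_add x (hasDerivAt_id t)).rpow_const
          (Or.inl (ne_of_gt (by linarith : (0:ℝ) < x + t)))
      have hd2 : HasDerivAt (fun t : ℝ => β * x ^ (β - 1) * t) (β * x ^ (β - 1)) t := by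
        simpa using (hasDerivAt_id t).const_mul (β * x ^ (β - 1))
      have := (hd1.sub hd2).hasDerivWithinAt (s := uIcc (0:ℝ) h)
      rw [one_mul] at this
      exact this)
    (fun t htt => by
      have hxt : x / 2 ≤ x + t := by
        have := (abs_le.mp ((habs t htt).trans hh)).1; linarith
      have hxx : x / 2 ≤ x := by linarith
      show ‖β * (x + t) ^ (β - 1) - β * x ^ (β - 1)‖ ≤ _
      rw [Real.norm_eq_abs, ← mul_sub, abs_mul, abs_of_pos hβ0]
      have hlip := rpow_lip (p := β - 1) (m := x / 2) (by linarith) (by linarith) hxt hxx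
      refine mul_le_mul_of_nonneg_left ?_ hβ0.le
      calc |(x + t) ^ (β - 1) - x ^ (β - 1)|
          ≤ |β - 1| * (x / 2) ^ (β - 1 - 1) * |x + t - x| := hlip
        _ = (1 - β) * (x / 2) ^ (β - 2) * |t| := by
            rw [abs_of_nonpos (by linarith : β - 1 ≤ 0),
              show β - 1 - 1 = β - 2 by ring, show x + t - x = t by ring]
            ring
        _ ≤ (1 - β) * (x / 2) ^ (β - 2) * |h| := by
            exact mul_le_mul_of_nonneg_left (habs t htt)
              (mul_nonneg (by linarith) (Real.rpow_nonneg (by positivity) _)))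
    (left_mem_uIcc) (right_mem_uIcc)
  have hg0 : g 0 = x ^ β := by simp [hg]
  have hgh : g h = (x + h) ^ β - β * x ^ (β - 1) * h := rfl
  rw [Real.norm_eq_abs, hgh, hg0, Real.norm_eq_abs] at key
  have key2 : |(x + h) ^ β - x ^ β - β * x ^ (β - 1) * h|
      ≤ β * ((1 - β) * (x / 2) ^ (β - 2) * |h|) * |h| := by
    calc |(x + h) ^ β - x ^ β - β * x ^ (β - 1) * h|
        = |(x + h) ^ β - β * x ^ (β - 1) * h - x ^ β| := by ring_nf
      _ ≤ _ := by simpa using key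
  have h24 : ((2:ℝ)) ^ (2:ℝ) = 4 := by
    rw [show (2:ℝ) = ((2:ℕ):ℝ) by norm_num, Real.rpow_natCast]; norm_num
  have hhalf : (x / 2) ^ (β - 2) ≤ 4 * x ^ (β - 2) := by
    have e1 : (x / 2) ^ (β - 2) = x ^ (β - 2) * ((2:ℝ)⁻¹) ^ (β - 2) := by
      rw [div_eq_mul_inv, Real.mul_rpow hx.le (by norm_num)]
    have e2 : ((2:ℝ)⁻¹) ^ (β - 2) = (2:ℝ) ^ (2 - β) := by
      rw [Real.inv_rpow (by norm_num), ← Real.rpow_neg (by norm_num)]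
      ring_nf
    have e3 : (2:ℝ) ^ (2 - β) ≤ 4 := by
      rw [← h24]
      exact Real.rpow_le_rpow_of_exponent_le one_le_two (by linarith)
    rw [e1, e2, mul_comm]
    exact mul_le_mul_of_nonneg_right e3 (Real.rpow_nonneg hx.le _)
  have hβq : β * (1 - β) ≤ 1 / 4 := by nlinarith [sq_nonneg (β - 1/2)]
  have hA : (0:ℝ) ≤ (x / 2) ^ (β - 2) := Real.rpow_nonneg (by positivity) _
  have s1 : β * (1 - β) * (x / 2) ^ (β - 2) ≤ x ^ (β - 2) :=
    calc β * (1 - β) * (x / 2) ^ (β - 2) ≤ (1/4) * (x / 2) ^ (β - 2) :=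
          mul_le_mul_of_nonneg_right hβq hA
      _ ≤ (1/4) * (4 * x ^ (β - 2)) := mul_le_mul_of_nonneg_left hhalf (by norm_num)
      _ = x ^ (β - 2) := by ring
  calc |(x + h) ^ β - x ^ β - β * x ^ (β - 1) * h|
      ≤ β * ((1 - β) * (x / 2) ^ (β - 2) * |h|) * |h| := key2
    _ = β * (1 - β) * (x / 2) ^ (β - 2) * h ^ 2 := by rw [← sq_abs h]; ring
    _ ≤ x ^ (β - 2) * h ^ 2 := mul_le_mul_of_nonneg_right s1 (sq_nonneg h)

lemma comp_bound {lam mu a c β x₁ x₂ K α : ℝ}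
    (hlam : 0 ≤ lam) (hmu : 0 ≤ mu) (ha : 0 ≤ a) (hc : 0 ≤ c)
    (hβ0 : 0 < β) (hβ1 : β ≤ 1) (hα : 0 < α)
    (hx₁ : α ≤ x₁) (hx₂ : 0 ≤ x₂) (hK : 2 / α ≤ K) :
    |lam * K * x₁ * ((x₁ + 1 / K) ^ β - x₁ ^ β)
        + K * x₁ * (mu + a * x₁ + c * x₂) * ((x₁ - 1 / K) ^ β - x₁ ^ β)
        - β * x₁ ^ β * ((lam - mu) - a * x₁ - c * x₂)|
      ≤ x₁ ^ (β - 1) * (lam + mu + a * x₁ + c * x₂) / K := by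
  have hK0 : 0 < K := lt_of_lt_of_le (by positivity) hK
  have hx₁0 : 0 < x₁ := lt_of_lt_of_le hα hx₁
  have hKα : 1 / K ≤ α / 2 := by
    rw [div_le_div_iff₀ hK0 (by norm_num)]
    calc (1:ℝ) * 2 = 2 := by ring
      _ ≤ α * K := by
          rw [← div_le_iff₀' hα]; exact hK
  have h1K : |1 / K| ≤ x₁ / 2 := by
    rw [abs_of_pos (by positivity)]; linarith
  have h1K' : |(-(1 / K))| ≤ x₁ / 2 := by rwa [abs_neg]
  have hEp := taylor_rpow hβ0 hβ1 hx₁0 h1K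
  have hEm0 := taylor_rpow hβ0 hβ1 hx₁0 h1K'
  have hEm : |(x₁ - 1 / K) ^ β - x₁ ^ β + β * x₁ ^ (β - 1) * (1 / K)|
      ≤ x₁ ^ (β - 2) * (1 / K) ^ 2 := by
    calc |(x₁ - 1 / K) ^ β - x₁ ^ β + β * x₁ ^ (β - 1) * (1 / K)|
        = |(x₁ + -(1 / K)) ^ β - x₁ ^ β - β * x₁ ^ (β - 1) * (-(1 / K))| := by
          rw [show x₁ + -(1 / K) = x₁ - 1 / K from by ring]; ring_nf
      _ ≤ x₁ ^ (β - 2) * (-(1 / K)) ^ 2 := hEm0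
      _ = x₁ ^ (β - 2) * (1 / K) ^ 2 := by rw [neg_sq]
  have hpq : x₁ ^ β = x₁ * x₁ ^ (β - 1) := by
    have h := Real.rpow_add hx₁0 1 (β - 1)
    rw [Real.rpow_one, show (1:ℝ) + (β - 1) = β from by ring] at h
    exact h
  have hpq2 : x₁ ^ (β - 1) = x₁ * x₁ ^ (β - 2) := by
    have h := Real.rpow_add hx₁0 1 (β - 2)
    rw [Real.rpow_one, show (1:ℝ) + (β - 2) = β - 1 from by ring] at h
    exact h
  have hK1 : K * (1 / K) = 1 := by field_simp
  have key : lam * K * x₁ * ((x₁ + 1 / K) ^ β - x₁ ^ β)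
        + K * x₁ * (mu + a * x₁ + c * x₂) * ((x₁ - 1 / K) ^ β - x₁ ^ β)
        - β * x₁ ^ β * ((lam - mu) - a * x₁ - c * x₂)
      = lam * K * x₁ * ((x₁ + 1 / K) ^ β - x₁ ^ β - β * x₁ ^ (β - 1) * (1 / K))
        + K * x₁ * (mu + a * x₁ + c * x₂)
            * ((x₁ - 1 / K) ^ β - x₁ ^ β + β * x₁ ^ (β - 1) * (1 / K)) := by
    linear_combination (β * ((lam - mu) - a * x₁ - c * x₂) * x₁ * x₁ ^ (β - 1)) * hK1
      - (β * ((lam - mu) - a * x₁ - c * x₂)) * hpq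
  have hm0 : 0 ≤ mu + a * x₁ + c * x₂ := by
    have := mul_nonneg ha hx₁0.le
    have := mul_nonneg hc hx₂
    linarith
  have hf1 : 0 ≤ lam * K * x₁ := by positivity
  have hf2 : 0 ≤ K * x₁ * (mu + a * x₁ + c * x₂) := by
    exact mul_nonneg (mul_nonneg hK0.le hx₁0.le) hm0
  rw [key]
  calc |lam * K * x₁ * ((x₁ + 1 / K) ^ β - x₁ ^ β - β * x₁ ^ (β - 1) * (1 / K))
        + K * x₁ * (mu + a * x₁ + c * x₂)
            * ((x₁ - 1 / K) ^ β - x₁ ^ β + β * x₁ ^ (β - 1) * (1 / K))|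
      ≤ |lam * K * x₁ * ((x₁ + 1 / K) ^ β - x₁ ^ β - β * x₁ ^ (β - 1) * (1 / K))|
        + |K * x₁ * (mu + a * x₁ + c * x₂)
            * ((x₁ - 1 / K) ^ β - x₁ ^ β + β * x₁ ^ (β - 1) * (1 / K))| := abs_add_le _ _
    _ = lam * K * x₁ * |(x₁ + 1 / K) ^ β - x₁ ^ β - β * x₁ ^ (β - 1) * (1 / K)|
        + K * x₁ * (mu + a * x₁ + c * x₂)
            * |(x₁ - 1 / K) ^ β - x₁ ^ β + β * x₁ ^ (β - 1) * (1 / K)| := by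
        rw [abs_mul (lam * K * x₁), abs_mul (K * x₁ * (mu + a * x₁ + c * x₂)),
          abs_of_nonneg hf1, abs_of_nonneg hf2]
    _ ≤ lam * K * x₁ * (x₁ ^ (β - 2) * (1 / K) ^ 2)
        + K * x₁ * (mu + a * x₁ + c * x₂) * (x₁ ^ (β - 2) * (1 / K) ^ 2) := by
        exact add_le_add (mul_le_mul_of_nonneg_left hEp hf1)
          (mul_le_mul_of_nonneg_left hEm hf2)
    _ = x₁ ^ (β - 1) * (lam + mu + a * x₁ + c * x₂) / K := by
        rw [hpq2]; field_simp; ring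


lemma nrm2_le_abs_add (u : ℝ × ℝ) : nrm2 u ≤ |u.1| + |u.2| := by
  rw [nrm2]
  have h : u.1 ^ 2 + u.2 ^ 2 ≤ (|u.1| + |u.2|) ^ 2 := by
    nlinarith [sq_abs u.1, sq_abs u.2, mul_nonneg (abs_nonneg u.1) (abs_nonneg u.2)]
  calc Real.sqrt (u.1 ^ 2 + u.2 ^ 2) ≤ Real.sqrt ((|u.1| + |u.2|) ^ 2) :=
        Real.sqrt_le_sqrt h
    _ = |u.1| + |u.2| := Real.sqrt_sq (by positivity)

lemma fst_le_nrm2 (u : ℝ × ℝ) (h : 0 ≤ u.1) : u.1 ≤ nrm2 u := by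
  rw [nrm2]
  have := Real.sqrt_le_sqrt (show u.1 ^ 2 ≤ u.1 ^ 2 + u.2 ^ 2 by nlinarith [sq_nonneg u.2])
  rwa [Real.sqrt_sq h] at this

lemma snd_le_nrm2 (u : ℝ × ℝ) (h : 0 ≤ u.2) : u.2 ≤ nrm2 u := by
  rw [nrm2]
  have := Real.sqrt_le_sqrt (show u.2 ^ 2 ≤ u.1 ^ 2 + u.2 ^ 2 by nlinarith [sq_nonneg u.1])
  rwa [Real.sqrt_sq h] at this

lemma dom_est {lam mu a c β x₁ x₂ α : ℝ}
    (hlam : 0 ≤ lam) (hmu : 0 ≤ mu) (ha : 0 ≤ a) (hc : 0 ≤ c)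
    (hβ0 : 0 < β) (hβ1 : β ≤ 1) (hα : 0 < α)
    (hx₁ : α ≤ x₁) (hx₂ : 0 ≤ x₂) (hcone : α * x₂ ≤ x₁) :
    x₁ ^ (β - 1) * (lam + mu + a * x₁ + c * x₂)
      ≤ α ^ (β - 1) * (lam + mu) + (a + c / α) * x₁ ^ β := by
  have hx₁0 : 0 < x₁ := lt_of_lt_of_le hα hx₁
  have hQ : 0 ≤ x₁ ^ (β - 1) := Real.rpow_nonneg hx₁0.le _
  have hpq : x₁ ^ β = x₁ * x₁ ^ (β - 1) := by
    have h := Real.rpow_add hx₁0 1 (β - 1)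
    rw [Real.rpow_one, show (1:ℝ) + (β - 1) = β from by ring] at h
    exact h
  have hr : x₁ ^ (β - 1) ≤ α ^ (β - 1) :=
    Real.rpow_le_rpow_of_nonpos hα hx₁ (by linarith)
  have h1 : x₁ ^ (β - 1) * (lam + mu) ≤ α ^ (β - 1) * (lam + mu) :=
    mul_le_mul_of_nonneg_right hr (add_nonneg hlam hmu)
  have h3 : c * (x₁ ^ (β - 1) * x₂) ≤ c / α * x₁ ^ β := by
    rw [hpq, div_mul_eq_mul_div, le_div_iff₀ hα]
    calc c * (x₁ ^ (β - 1) * x₂) * α = c * (x₁ ^ (β - 1) * (α * x₂)) := by ring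
      _ ≤ c * (x₁ ^ (β - 1) * x₁) :=
          mul_le_mul_of_nonneg_left (mul_le_mul_of_nonneg_left hcone hQ) hc
      _ = c * (x₁ * x₁ ^ (β - 1)) := by ring
  nlinarith [hpq, h1, h3]

set_option maxHeartbeats 1000000 in
/-- `‖ψ^K_{β,γ}(y) − ψ_{β,γ}(y)‖₂ ≤ C(1+‖y‖₂)/K` uniformly on `F_{β,γ}(𝔇_α)`
for `K ≥ 2/α`. -/
theorem stmt13 (lam₁ lam₂ mu₁ mu₂ a b c d : ℝ)
    (hlam₁ : 0 ≤ lam₁) (hlam₂ : 0 ≤ lam₂) (hmu₁ : 0 ≤ mu₁) (hmu₂ : 0 ≤ mu₂)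
    (ha : 0 ≤ a) (hb : 0 ≤ b) (hc : 0 ≤ c) (hd : 0 ≤ d)
    (α : ℝ) (hα : 0 < α) (β : ℝ) (hβ : β ∈ Set.Ioc (0 : ℝ) 1) (γ : ℝ) (hγ : 0 < γ) :
    ∃ C > 0, ∀ y ∈ FLV β γ '' Dfrak α, ∀ K : ℝ, 2 / α ≤ K →
      nrm2 (psiKbd lam₁ lam₂ mu₁ mu₂ a b c d β γ K y
          - psiLVbd lam₁ lam₂ mu₁ mu₂ a b c d β γ y) ≤ C * (1 + nrm2 y) / K := by
  obtain ⟨hβ0, hβ1⟩ := hβ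
  have hα' : (0:ℝ) ≤ α ^ (β - 1) := Real.rpow_nonneg hα.le _
  obtain ⟨A, hA⟩ : ∃ t : ℝ,
      t = α ^ (β - 1) * (lam₁ + mu₁) + γ * (α ^ (β - 1) * (lam₂ + mu₂)) := ⟨_, rfl⟩
  obtain ⟨B, hB⟩ : ∃ t : ℝ, t = (a + c / α) + (b + d / α) := ⟨_, rfl⟩
  have hA0 : 0 ≤ A := hA ▸ add_nonneg (mul_nonneg hα' (add_nonneg hlam₁ hmu₁))
    (mul_nonneg hγ.le (mul_nonneg hα' (add_nonneg hlam₂ hmu₂)))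
  have hB0 : 0 ≤ B := hB ▸ add_nonneg (add_nonneg ha (div_nonneg hc hα.le))
    (add_nonneg hb (div_nonneg hd hα.le))
  refine ⟨A + B + 1, by linarith, ?_⟩
  rintro y ⟨x, hxD, rfl⟩ K hK
  obtain ⟨hx1, hx2, hc1, hc2⟩ := hxD
  have hx10 : 0 < x.1 := lt_trans hα hx1
  have hx20 : 0 < x.2 := lt_trans hα hx2
  have hK0 : 0 < K := lt_of_lt_of_le (by positivity) hK
  have e1 : ((x.1 ^ β) ^ (1 / β) : ℝ) = x.1 := by
    rw [← Real.rpow_mul hx10.le, mul_one_div, div_self hβ0.ne', Real.rpow_one]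
  have e2 : ((γ * x.2 ^ β / γ) ^ (1 / β) : ℝ) = x.2 := by
    rw [mul_div_cancel_left₀ _ hγ.ne', ← Real.rpow_mul hx20.le, mul_one_div,
      div_self hβ0.ne', Real.rpow_one]
  have e3 : ((γ * x.2 ^ β) ^ (1 / β) : ℝ) = γ ^ (1 / β) * x.2 := by
    rw [Real.mul_rpow hγ.le (Real.rpow_nonneg hx20.le _), ← Real.rpow_mul hx20.le,
      mul_one_div, div_self hβ0.ne', Real.rpow_one]
  have e4 : (γ : ℝ) ^ (-(1 / β)) * γ ^ (1 / β) = 1 := by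
    rw [← Real.rpow_add hγ]; simp
  set D₁ : ℝ := lam₁ * K * x.1 * ((x.1 + 1 / K) ^ β - x.1 ^ β)
      + K * x.1 * (mu₁ + a * x.1 + c * x.2) * ((x.1 - 1 / K) ^ β - x.1 ^ β)
      - β * x.1 ^ β * ((lam₁ - mu₁) - a * x.1 - c * x.2) with hD₁
  set D₂ : ℝ := lam₂ * K * x.2 * ((x.2 + 1 / K) ^ β - x.2 ^ β)
      + K * x.2 * (mu₂ + b * x.2 + d * x.1) * ((x.2 - 1 / K) ^ β - x.2 ^ β)
      - β * x.2 ^ β * ((lam₂ - mu₂) - b * x.2 - d * x.1) with hD₂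
  have hdiff : psiKbd lam₁ lam₂ mu₁ mu₂ a b c d β γ K (FLV β γ x)
      - psiLVbd lam₁ lam₂ mu₁ mu₂ a b c d β γ (FLV β γ x) = (D₁, γ * D₂) := by
    simp only [psiKbd, hKbd, psiLVbd, FLV, Prod.mk_sub_mk, hD₁, hD₂]
    rw [e1, e2, e3, Prod.mk.injEq]
    constructor
    · linear_combination (β * x.1 ^ β * c * x.2) * e4
    · linear_combination (β * γ * x.2 ^ β * b * x.2) * e4
  rw [hdiff]
  have b1 : |D₁| ≤ x.1 ^ (β - 1) * (lam₁ + mu₁ + a * x.1 + c * x.2) / K :=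
    comp_bound hlam₁ hmu₁ ha hc hβ0 hβ1 hα hx1.le hx20.le hK
  have b2 : |D₂| ≤ x.2 ^ (β - 1) * (lam₂ + mu₂ + b * x.2 + d * x.1) / K :=
    comp_bound hlam₂ hmu₂ hb hd hβ0 hβ1 hα hx2.le hx10.le hK
  have t1 : x.1 ^ (β - 1) * (lam₁ + mu₁ + a * x.1 + c * x.2)
      ≤ α ^ (β - 1) * (lam₁ + mu₁) + (a + c / α) * x.1 ^ β :=
    dom_est hlam₁ hmu₁ ha hc hβ0 hβ1 hα hx1.le hx20.le hc1
  have t2 : x.2 ^ (β - 1) * (lam₂ + mu₂ + b * x.2 + d * x.1)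
      ≤ α ^ (β - 1) * (lam₂ + mu₂) + (b + d / α) * x.2 ^ β :=
    dom_est hlam₂ hmu₂ hb hd hβ0 hβ1 hα hx2.le hx10.le hc2
  obtain ⟨N, hN⟩ : ∃ t : ℝ, t = nrm2 (FLV β γ x) := ⟨_, rfl⟩
  rw [← hN]
  have hN0 : 0 ≤ N := hN ▸ Real.sqrt_nonneg _
  have hy1 : x.1 ^ β ≤ N := hN ▸
    fst_le_nrm2 (FLV β γ x) (Real.rpow_nonneg hx10.le _)
  have hy2 : γ * x.2 ^ β ≤ N := hN ▸
    snd_le_nrm2 (FLV β γ x) (mul_nonneg hγ.le (Real.rpow_nonneg hx20.le _))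
  have habs2 : |γ * D₂| = γ * |D₂| := by
    rw [abs_mul, abs_of_pos hγ]
  calc nrm2 (D₁, γ * D₂) ≤ |D₁| + |γ * D₂| := nrm2_le_abs_add _
    _ = |D₁| + γ * |D₂| := by rw [habs2]
    _ ≤ x.1 ^ (β - 1) * (lam₁ + mu₁ + a * x.1 + c * x.2) / K
        + γ * (x.2 ^ (β - 1) * (lam₂ + mu₂ + b * x.2 + d * x.1) / K) :=
        add_le_add b1 (mul_le_mul_of_nonneg_left b2 hγ.le)
    _ = (x.1 ^ (β - 1) * (lam₁ + mu₁ + a * x.1 + c * x.2)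
        + γ * (x.2 ^ (β - 1) * (lam₂ + mu₂ + b * x.2 + d * x.1))) / K := by ring
    _ ≤ ((A + B + 1) * (1 + N)) / K := by
        have hnum : x.1 ^ (β - 1) * (lam₁ + mu₁ + a * x.1 + c * x.2)
            + γ * (x.2 ^ (β - 1) * (lam₂ + mu₂ + b * x.2 + d * x.1))
            ≤ (A + B + 1) * (1 + N) := by
          have g2 : γ * (x.2 ^ (β - 1) * (lam₂ + mu₂ + b * x.2 + d * x.1))
              ≤ γ * (α ^ (β - 1) * (lam₂ + mu₂)) + (b + d / α) * (γ * x.2 ^ β) :=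
            le_trans (mul_le_mul_of_nonneg_left t2 hγ.le) (le_of_eq (by ring))
          have g3 := mul_le_mul_of_nonneg_left hy1 (add_nonneg ha (div_nonneg hc hα.le))
          have g4 := mul_le_mul_of_nonneg_left hy2 (add_nonneg hb (div_nonneg hd hα.le))
          have g5 : (a + c / α + (b + d / α)) * N ≤ (A + B + 1) * N :=
            mul_le_mul_of_nonneg_right (by linarith only [hA0, hB]) hN0
          have g6 := mul_nonneg hA0 hN0
          linarith only [t1, g2, g3, g4, g5, g6, hA0, hB0, hN0, hA, hB]
        exact (div_le_div_iff_of_pos_right hK0).mpr hnum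
    _ = (A + B + 1) * (1 + N) / K := by ring
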